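/- Let (V, F) be a matroid whose maximum independent sets have cardinality N, and let f : 2^V → ℝ be strictly increasing with submodularity ratio γ ∈ (0,1) and curvature α ∈ [0,1). If R^r is the output of the greedy algorithm (at each step adding the feasible element with the smallest marginal gain until |R| = N) and R* is the optimal solution of min{f(R) : R ∈ F, |R| ≥ N}, then (f(R^r) − f(∅)) / (f(R*) − f(∅)) ≤ (γ/(1−γ))·((2N+1)^{(1−γ)/(γ(1−α))} − 1). -/

import Mathlib

lemma aux_exp_le (x : ℝ) (hx0 : 0 < x) (hx1 : x ≤ 1) : Real.exp x ≤ (2 + x) / (2 - x) := by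
  have hb := Real.exp_bound (x := x) (by rw [abs_of_pos hx0]; exact hx1) (n := 3) (by norm_num)
  rw [abs_of_pos hx0] at hb
  have hsum : ∑ m ∈ Finset.range 3, x ^ m / (m.factorial : ℝ) = 1 + x + x ^ 2 / 2 := by
    rw [Finset.sum_range_succ, Finset.sum_range_succ, Finset.sum_range_succ,
      Finset.sum_range_zero]
    norm_num [Nat.factorial]
  rw [hsum] at hb
  have h2 : Real.exp x ≤ 1 + x + x ^ 2 / 2 + x ^ 3 * (2 / 9) := by
    have h3 := (abs_le.mp hb).2
    norm_num [Nat.factorial] at h3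
    linarith
  rw [le_div_iff₀ (by linarith : (0:ℝ) < 2 - x)]
  nlinarith [pow_pos hx0 3, pow_pos hx0 4]

lemma aux_term (x θ : ℝ) (hx0 : 0 < x) (hx1 : x ≤ 1) (hθ : 0 < θ) :
    1 + θ * x ≤ ((2 + x) / (2 - x)) ^ θ := by
  have hq : (0:ℝ) < (2 + x) / (2 - x) := div_pos (by linarith) (by linarith)
  have hxlog : x ≤ Real.log ((2 + x) / (2 - x)) :=
    (Real.le_log_iff_exp_le hq).mpr (aux_exp_le x hx0 hx1)
  calc 1 + θ * x ≤ Real.exp (θ * x) := by linarith [Real.add_one_le_exp (θ * x)]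
    _ ≤ Real.exp (Real.log ((2 + x) / (2 - x)) * θ) := by
        apply Real.exp_le_exp.mpr; nlinarith
    _ = ((2 + x) / (2 - x)) ^ θ := (Real.rpow_def_of_pos hq θ).symm

lemma aux_prod (θ : ℝ) (hθ : 0 < θ) (N : ℕ) :
    ∏ k ∈ Finset.range N, (1 + θ / ((k:ℝ) + 1)) ≤ (2 * (N:ℝ) + 1) ^ θ := by
  induction N with
  | zero => simp
  | succ n ih =>
    rw [Finset.prod_range_succ]
    have hn1 : (0:ℝ) < (n:ℝ) + 1 := by positivity
    have hterm : 1 + θ / ((n:ℝ) + 1) ≤ ((2 * (n:ℝ) + 3) / (2 * (n:ℝ) + 1)) ^ θ := by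
      have hx0 : (0:ℝ) < 1 / ((n:ℝ) + 1) := by positivity
      have hx1 : 1 / ((n:ℝ) + 1) ≤ 1 := by
        rw [div_le_one hn1]; linarith [Nat.cast_nonneg (α := ℝ) n]
      have h := aux_term (1 / ((n:ℝ) + 1)) θ hx0 hx1 hθ
      have he : (2 + 1 / ((n:ℝ) + 1)) / (2 - 1 / ((n:ℝ) + 1))
          = (2 * (n:ℝ) + 3) / (2 * (n:ℝ) + 1) := by
        have hpos2 : (0:ℝ) < 2 - 1 / ((n:ℝ) + 1) := by
          rw [sub_pos, div_lt_iff₀ hn1]; linarith [Nat.cast_nonneg (α := ℝ) n]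
        rw [div_eq_div_iff hpos2.ne' (by positivity : (2 * (n:ℝ) + 1) ≠ 0)]
        field_simp
        ring
      rw [he, mul_one_div] at h
      exact h
    have hprodnn : (0:ℝ) ≤ ∏ k ∈ Finset.range n, (1 + θ / ((k:ℝ) + 1)) := by
      apply Finset.prod_nonneg; intro k _; positivity
    calc (∏ k ∈ Finset.range n, (1 + θ / ((k:ℝ) + 1))) * (1 + θ / ((n:ℝ) + 1))
        ≤ (2 * (n:ℝ) + 1) ^ θ * ((2 * (n:ℝ) + 3) / (2 * (n:ℝ) + 1)) ^ θ := by
          apply mul_le_mul ih hterm (by positivity) (by positivity)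
      _ = (2 * ((n:ℝ) + 1) + 1) ^ θ := by
          rw [← Real.mul_rpow (by positivity) (by positivity)]
          congr 1
          field_simp
          ring
      _ = (2 * (((n:ℕ) + 1 : ℕ):ℝ) + 1) ^ θ := by push_cast; ring_nf

/-- A matroid on a finite ground set `V`, given as a collection of independent sets. -/
structure IsMatroid {V : Type*} [DecidableEq V] [Fintype V] (F : Set (Finset V)) : Prop where
  empty_mem : ∅ ∈ F
  downward : ∀ S ∈ F, ∀ S' ⊆ S, S' ∈ F
  exchange : ∀ S₁ ∈ F, ∀ S₂ ∈ F, S₁.card < S₂.card → ∃ v ∈ S₂ \ S₁, insert v S₁ ∈ F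

/-- Performance guarantee for the reverse greedy algorithm minimizing a strictly increasing,
`γ`-submodular, `α`-supermodular function over a matroid with cardinality lower bound `N`. -/
theorem reverse_greedy_guarantee {V : Type*} [DecidableEq V] [Fintype V]
    (F : Set (Finset V)) (hF : IsMatroid F) (N : ℕ)
    (hcard_le : ∀ S ∈ F, S.card ≤ N) (hcard_max : ∃ S ∈ F, S.card = N)
    (f : Finset V → ℝ) (hstrict : ∀ S T : Finset V, S ⊂ T → f S < f T)
    (γ α : ℝ) (hγ0 : 0 < γ) (hγ1 : γ < 1) (hα0 : 0 ≤ α) (hα1 : α < 1)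
    (hsub : ∀ (S U : Finset V) (v : V), v ∉ S ∪ U →
      γ * (f (insert v (S ∪ U)) - f (S ∪ U)) ≤ f (insert v S) - f S)
    (hcurv : ∀ (S U : Finset V) (v : V), v ∉ S ∪ U →
      f (insert v (S ∪ U)) - f (S ∪ U) ≥ (1 - α) * (f (insert v S) - f S))
    (R : ℕ → Finset V) (hR0 : R 0 = ∅)
    (hgreedy : ∀ t < N, ∃ r : V, r ∉ R t ∧ insert r (R t) ∈ F ∧
      R (t + 1) = insert r (R t) ∧
      ∀ w : V, w ∉ R t → insert w (R t) ∈ F →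
        f (insert r (R t)) - f (R t) ≤ f (insert w (R t)) - f (R t))
    (Rstar : Finset V) (hRstar : Rstar ∈ F) (hRstarN : N ≤ Rstar.card)
    (hopt : ∀ T ∈ F, N ≤ T.card → f Rstar ≤ f T)
    (hgap : f ∅ < f Rstar) :
    (f (R N) - f ∅) / (f Rstar - f ∅) ≤
      (γ / (1 - γ)) * ((2 * (N : ℝ) + 1) ^ ((1 - γ) / (γ * (1 - α))) - 1) := by
  have h1α : (0:ℝ) < 1 - α := by linarith
  have h1γ : (0:ℝ) < 1 - γ := by linarith
  have hθpos : (0:ℝ) < (1 - γ) / (γ * (1 - α)) := by positivity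
  have hβ : (0:ℝ) < f Rstar - f ∅ := by linarith
  have fmono : ∀ S T : Finset V, S ⊆ T → f S ≤ f T := by
    intro S T h
    rcases eq_or_ne S T with rfl | hne
    · exact le_refl _
    · exact (hstrict S T (Finset.ssubset_iff_subset_ne.mpr ⟨h, hne⟩)).le
  have hRstarcard : Rstar.card = N := le_antisymm (hcard_le _ hRstar) hRstarN
  have hRfacts : ∀ t, t ≤ N → R t ∈ F ∧ (R t).card = t := by
    intro t; induction t with
    | zero => intro _; rw [hR0]; exact ⟨hF.empty_mem, Finset.card_empty⟩
    | succ n ih =>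
      intro h
      have hn : n < N := h
      obtain ⟨hf', hc⟩ := ih hn.le
      obtain ⟨r, hrnot, hrF, hrins, _⟩ := hgreedy n hn
      rw [hrins]
      exact ⟨hrF, by rw [Finset.card_insert_of_notMem hrnot, hc]⟩
  have hRmono : ∀ j t, j ≤ t → t ≤ N → R j ⊆ R t := by
    intro j t hjt htN
    induction t with
    | zero =>
      rw [Nat.le_zero.mp hjt]
    | succ n ih =>
      rcases Nat.lt_or_ge j (n+1) with h|h
      · have h1 : R j ⊆ R n := ih (Nat.lt_succ_iff.mp h) (le_trans (Nat.le_succ n) htN)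
        obtain ⟨r, hrnot, hrF, hrins, _⟩ := hgreedy n htN
        rw [hrins]
        exact h1.trans (Finset.subset_insert r (R n))
      · have : j = n + 1 := le_antisymm hjt h
        rw [this]
  -- chain extension lemma
  have chain : ∀ n (S : Finset V), S ∈ F → S.card + n ≤ N →
      ∃ g : ℕ → Finset V, g 0 = S ∧ (∀ i ≤ n, g i ∈ F) ∧
        (∀ i < n, ∃ v, v ∈ Rstar ∧ v ∉ g i ∧ g (i+1) = insert v (g i)) ∧
        g n ⊆ S ∪ Rstar ∧ (∀ i ≤ n, S ⊆ g i) := by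
    intro n
    induction n with
    | zero =>
      intro S hS _
      exact ⟨fun _ => S, rfl, fun i _ => hS, fun i h => absurd h (Nat.not_lt_zero i),
        Finset.subset_union_left, fun i _ => Finset.Subset.refl _⟩
    | succ n ih =>
      intro S hS hcard
      have hlt : S.card < Rstar.card := by rw [hRstarcard]; omega
      obtain ⟨v, hv, hvF⟩ := hF.exchange S hS Rstar hRstar hlt
      rw [Finset.mem_sdiff] at hv
      have hcard' : (insert v S).card + n ≤ N := by
        rw [Finset.card_insert_of_notMem hv.2]; omega
      obtain ⟨g, hg0, hgF, hgstep, hgsub, hgmono⟩ := ih (insert v S) hvF hcard'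
      refine ⟨fun i => Nat.casesOn i S g, rfl, ?_, ?_, ?_, ?_⟩
      · intro i hi
        cases i with
        | zero => exact hS
        | succ j => exact hgF j (by omega)
      · intro i hi
        cases i with
        | zero => exact ⟨v, hv.1, hv.2, by simp [hg0]⟩
        | succ j =>
          obtain ⟨w, h1, h2, h3⟩ := hgstep j (by omega)
          exact ⟨w, h1, h2, h3⟩
      · intro x hx
        have hx2 := hgsub hx
        rcases Finset.mem_union.mp hx2 with h|h
        · rcases Finset.mem_insert.mp h with h'|h'
          · exact Finset.mem_union_right _ (h' ▸ hv.1)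
          · exact Finset.mem_union_left _ h'
        · exact Finset.mem_union_right _ h
      · intro i hi
        cases i with
        | zero => exact Finset.Subset.refl _
        | succ j =>
          exact (Finset.subset_insert v S).trans (hgmono j (by omega))
  -- per-step inequality
  have step : ∀ t, t < N →
      f (R (t+1)) - f ∅ + γ * (f Rstar - f ∅) / (1 - γ) ≤
      (f (R t) - f ∅ + γ * (f Rstar - f ∅) / (1 - γ)) *
        (1 + ((1 - γ) / (γ * (1 - α))) / ((N:ℝ) - t)) := by
    intro t ht
    obtain ⟨hRtF, hRtcard⟩ := hRfacts t ht.le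
    set m := N - t with hm
    have hmcard : (R t).card + m ≤ N := by omega
    obtain ⟨g, hg0, hgF, hgstep, hgsub, hgmono⟩ := chain m (R t) hRtF hmcard
    set A := g m \ R t with hA
    have hRtg : R t ⊆ g m := hgmono m le_rfl
    have hgmA : g m = R t ∪ A := (Finset.union_sdiff_of_subset hRtg).symm
    have hAsub : A ⊆ Rstar := by
      intro x hx
      have h1 := Finset.mem_sdiff.mp hx
      rcases Finset.mem_union.mp (hgsub h1.1) with h|h
      · exact absurd h h1.2
      · exact h
    have hAdisj : ∀ x ∈ A, x ∉ R t := fun x hx => (Finset.mem_sdiff.mp hx).2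
    obtain ⟨r, hrnot, hrF, hrins, hrmin⟩ := hgreedy t ht
    -- (i) per-element lower bound via curvature
    have hi : ∀ i < m, (1 - α) * (f (R (t+1)) - f (R t)) ≤ f (g (i+1)) - f (g i) := by
      intro i hilt
      obtain ⟨v, hvR, hvg, hvins⟩ := hgstep i hilt
      have hRtgi : R t ⊆ g i := hgmono i hilt.le
      have hvRt : v ∉ R t := fun h => hvg (hRtgi h)
      have huni : R t ∪ (g i \ R t) = g i := Finset.union_sdiff_of_subset hRtgi
      have hvnot : v ∉ R t ∪ (g i \ R t) := by rw [huni]; exact hvg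
      have hc := hcurv (R t) (g i \ R t) v hvnot
      rw [huni] at hc
      have hvF : insert v (R t) ∈ F := by
        apply hF.downward _ (hgF (i+1) hilt)
        rw [hvins]
        exact Finset.insert_subset_insert v hRtgi
      have hmin := hrmin v hvRt hvF
      rw [← hrins] at hmin
      calc (1 - α) * (f (R (t+1)) - f (R t))
          ≤ (1 - α) * (f (insert v (R t)) - f (R t)) :=
            mul_le_mul_of_nonneg_left hmin h1α.le
        _ ≤ f (insert v (g i)) - f (g i) := hc
        _ = f (g (i+1)) - f (g i) := by rw [hvins]
    have hisum : (m:ℝ) * ((1 - α) * (f (R (t+1)) - f (R t))) ≤ f (g m) - f (R t) := by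
      have h1 := Finset.sum_le_sum (fun i hi' => hi i (Finset.mem_range.mp hi'))
      rw [Finset.sum_const, Finset.card_range, nsmul_eq_mul] at h1
      have h2' : ∑ i ∈ Finset.range m, (f (g (i+1)) - f (g i)) = f (g m) - f (g 0) :=
        Finset.sum_range_sub (fun i => f (g i)) m
      rw [h2', hg0] at h1
      exact h1
    -- (ii) submodularity chain
    have hii : ∀ j < t, γ * (f (A ∪ R (j+1)) - f (A ∪ R j)) ≤ f (R (j+1)) - f (R j) := by
      intro j hjt
      obtain ⟨u, hunot, huF, huins, humin⟩ := hgreedy j (lt_trans hjt ht)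
      have huRt : u ∈ R t := hRmono (j+1) t hjt ht.le (huins ▸ Finset.mem_insert_self u (R j))
      have huA : u ∉ A := fun h => hAdisj u h huRt
      have hunion : u ∉ R j ∪ A := by
        rw [Finset.mem_union]; push_neg; exact ⟨hunot, huA⟩
      have hs := hsub (R j) A u hunion
      rw [Finset.union_comm (R j) A] at hs
      rw [huins, Finset.union_insert]
      exact hs
    have hiisum : γ * (f (g m) - f A) ≤ f (R t) - f ∅ := by
      have h1 := Finset.sum_le_sum (fun j hj' => hii j (Finset.mem_range.mp hj'))
      rw [← Finset.mul_sum] at h1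
      have e1 : ∑ j ∈ Finset.range t, (f (A ∪ R (j+1)) - f (A ∪ R j)) =
          f (A ∪ R t) - f (A ∪ R 0) := Finset.sum_range_sub (fun j => f (A ∪ R j)) t
      have e2 : ∑ j ∈ Finset.range t, (f (R (j+1)) - f (R j)) = f (R t) - f (R 0) :=
        Finset.sum_range_sub (fun j => f (R j)) t
      rw [e1, e2, hR0, Finset.union_empty] at h1
      rw [hgmA, Finset.union_comm (R t) A]
      exact h1
    -- (iii)
    have hiii : f A ≤ f Rstar := fmono A Rstar hAsub
    -- combine
    have hφnn : 0 ≤ f (R t) - f ∅ :=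
      sub_nonneg.mpr (fmono ∅ (R t) (Finset.empty_subset _))
    have hm1 : 1 ≤ m := by omega
    have hmR : (m:ℝ) = (N:ℝ) - t := by
      rw [hm, Nat.cast_sub ht.le]
    have hm0 : (0:ℝ) < (m:ℝ) := by exact_mod_cast hm1
    rw [← hmR]
    set P := f (R t) - f ∅ with hP
    set Q := f (R (t+1)) - f ∅ with hQ
    set B := f Rstar - f ∅ with hB
    set c := f (g m) - f (R t) with hc
    have h1 : (m:ℝ) * ((1 - α) * (Q - P)) ≤ c := by
      have : Q - P = f (R (t+1)) - f (R t) := by rw [hQ, hP]; ring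
      rw [this]; exact hisum
    have h2 : γ * (c + P - (f A - f ∅)) ≤ P := by
      have : c + P - (f A - f ∅) = f (g m) - f A := by rw [hc, hP]; ring
      rw [this]; exact hiisum
    have h3 : f A - f ∅ ≤ B := by rw [hB]; linarith
    have h4 : γ * ((m:ℝ) * ((1 - α) * (Q - P))) ≤ (1 - γ) * P + γ * B := by
      have h1' := mul_le_mul_of_nonneg_left h1 hγ0.le
      nlinarith [h2, h3]
    have key : γ * (1 - α) * (m:ℝ) * ((1 - γ) * Q + γ * B) ≤
        ((1 - γ) * P + γ * B) * (γ * (1 - α) * (m:ℝ) + (1 - γ)) := by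
      nlinarith [mul_le_mul_of_nonneg_left h4 h1γ.le]
    have hden : (0:ℝ) < (1 - γ) * (γ * (1 - α) * (m:ℝ)) := by positivity
    have e1 : Q + γ * B / (1 - γ) =
        γ * (1 - α) * (m:ℝ) * ((1 - γ) * Q + γ * B) / ((1 - γ) * (γ * (1 - α) * (m:ℝ))) := by
      field_simp
    have e2 : (P + γ * B / (1 - γ)) * (1 + ((1 - γ) / (γ * (1 - α))) / (m:ℝ)) =
        ((1 - γ) * P + γ * B) * (γ * (1 - α) * (m:ℝ) + (1 - γ)) /
          ((1 - γ) * (γ * (1 - α) * (m:ℝ))) := by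
      rw [eq_div_iff (ne_of_gt hden)]
      field_simp
      try (left; trivial)
    rw [e1, e2]
    gcongr
  -- accumulate
  have hu : ∀ t, t ≤ N → f (R t) - f ∅ + γ * (f Rstar - f ∅) / (1 - γ) ≤
      (γ * (f Rstar - f ∅) / (1 - γ)) *
        ∏ j ∈ Finset.range t, (1 + ((1 - γ) / (γ * (1 - α))) / ((N:ℝ) - j)) := by
    intro t
    induction t with
    | zero => intro _; simp [hR0]
    | succ n ih =>
      intro h
      have hn : n < N := h
      have ihn := ih hn.le
      have hNn : (0:ℝ) < (N:ℝ) - n := by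
        have : (n:ℝ) < (N:ℝ) := by exact_mod_cast hn
        linarith
      have hfac : (0:ℝ) ≤ 1 + ((1 - γ) / (γ * (1 - α))) / ((N:ℝ) - n) := by positivity
      calc f (R (n+1)) - f ∅ + γ * (f Rstar - f ∅) / (1 - γ)
          ≤ (f (R n) - f ∅ + γ * (f Rstar - f ∅) / (1 - γ)) *
              (1 + ((1 - γ) / (γ * (1 - α))) / ((N:ℝ) - n)) := step n hn
        _ ≤ ((γ * (f Rstar - f ∅) / (1 - γ)) *
              ∏ j ∈ Finset.range n, (1 + ((1 - γ) / (γ * (1 - α))) / ((N:ℝ) - j))) *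
              (1 + ((1 - γ) / (γ * (1 - α))) / ((N:ℝ) - n)) :=
            mul_le_mul_of_nonneg_right ihn hfac
        _ = (γ * (f Rstar - f ∅) / (1 - γ)) *
              ∏ j ∈ Finset.range (n+1), (1 + ((1 - γ) / (γ * (1 - α))) / ((N:ℝ) - j)) := by
            rw [Finset.prod_range_succ, mul_assoc]
  -- product bound
  have hprodle : ∏ j ∈ Finset.range N, (1 + ((1 - γ) / (γ * (1 - α))) / ((N:ℝ) - j)) ≤
      (2 * (N:ℝ) + 1) ^ ((1 - γ) / (γ * (1 - α))) := by
    have hrefl := Finset.prod_range_reflect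
      (fun k => 1 + ((1 - γ) / (γ * (1 - α))) / ((k:ℝ) + 1)) N
    have hcongr : ∏ j ∈ Finset.range N, (1 + ((1 - γ) / (γ * (1 - α))) / ((N:ℝ) - j)) =
        ∏ j ∈ Finset.range N, (1 + ((1 - γ) / (γ * (1 - α))) / (((N - 1 - j : ℕ):ℝ) + 1)) := by
      apply Finset.prod_congr rfl
      intro j hj
      have hjN : j < N := Finset.mem_range.mp hj
      have e3 : ((N - 1 - j : ℕ):ℝ) + 1 = (N:ℝ) - j := by
        have h5 : (N - 1 - j) + 1 = N - j := by omega
        have h6 : ((N - 1 - j : ℕ):ℝ) + 1 = ((N - j : ℕ):ℝ) := by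
          rw [← h5]; push_cast; ring
        rw [h6, Nat.cast_sub hjN.le]
      rw [e3]
    rw [hcongr, hrefl]
    exact aux_prod _ hθpos N
  -- conclude
  have hfinal := hu N le_rfl
  have hK : (0:ℝ) ≤ γ * (f Rstar - f ∅) / (1 - γ) := by positivity
  have hchain2 : (γ * (f Rstar - f ∅) / (1 - γ)) *
      ∏ j ∈ Finset.range N, (1 + ((1 - γ) / (γ * (1 - α))) / ((N:ℝ) - j)) ≤
      (γ * (f Rstar - f ∅) / (1 - γ)) * (2 * (N:ℝ) + 1) ^ ((1 - γ) / (γ * (1 - α))) :=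
    mul_le_mul_of_nonneg_left hprodle hK
  rw [div_le_iff₀ hβ]
  have : (γ / (1 - γ)) * ((2 * (N:ℝ) + 1) ^ ((1 - γ) / (γ * (1 - α))) - 1) * (f Rstar - f ∅) =
      (γ * (f Rstar - f ∅) / (1 - γ)) * (2 * (N:ℝ) + 1) ^ ((1 - γ) / (γ * (1 - α))) -
        γ * (f Rstar - f ∅) / (1 - γ) := by ring
  rw [this]
  linarith [hfinal, hchain2]
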